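/- Let m ≥ 4 be even, h = m/2, n = q^m - 1, and let a be an integer with q^h + 1 ≤ a ≤ q^{h+1} and q ∤ a. Then: (1) if a = c(q^h + 1) for some 1 ≤ c ≤ q-1, then a is a coset leader with |C_a| = m/2; (2) if a = a_h q^h + a_0 with 1 ≤ a_0 < a_h ≤ q-1, then a is not a coset leader; (3) in all other cases a is a coset leader with |C_a| = m. -/

import Mathlib

/-- The q-cyclotomic coset of a modulo n: {a * q^j mod n : j ≥ 0}. -/
def cyclCoset (q n a : ℕ) : Finset ℕ :=
  (Finset.range n).image (fun j => a * q ^ j % n)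

/-- a is the coset leader (smallest element) of its q-cyclotomic coset modulo n. -/
def IsCosetLeader (q n a : ℕ) : Prop :=
  ∀ j : ℕ, a ≤ a * q ^ j % n

section stmt10aux

lemma stmt10_bezout (d m : ℕ) (hd : 0 < d) (hm : 0 < m) :
    ∃ x y : ℕ, 0 < x ∧ d * x = m * y + Nat.gcd d m := by
  have hb := Nat.gcd_eq_gcd_ab d m
  set u := Nat.gcdA d m with hu
  set v := Nat.gcdB d m with hv
  set t : ℤ := |u| + |v| + 1 with ht
  have h1 : -u ≤ |u| := neg_le_abs u
  have h2 : v ≤ |v| := le_abs_self v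
  have h3 : (0:ℤ) ≤ |u| := abs_nonneg u
  have h4 : (0:ℤ) ≤ |v| := abs_nonneg v
  have hm1 : (1:ℤ) ≤ (m:ℤ) := by exact_mod_cast hm
  have hd1 : (1:ℤ) ≤ (d:ℤ) := by exact_mod_cast hd
  have hx : 0 < u + t * m := by nlinarith
  have hy : 0 ≤ (d:ℤ) * t - v := by nlinarith
  have heq : (d:ℤ) * (u + t * m) = m * ((d:ℤ) * t - v) + Nat.gcd d m := by
    linear_combination -hb
  refine ⟨(u + t * m).toNat, ((d:ℤ) * t - v).toNat, by omega, ?_⟩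
  have hcast : ((d * (u + t * m).toNat : ℕ) : ℤ)
      = ((m * ((d:ℤ) * t - v).toNat + Nat.gcd d m : ℕ) : ℤ) := by
    push_cast [Int.toNat_of_nonneg hx.le, Int.toNat_of_nonneg hy]
    linarith [heq]
  exact_mod_cast hcast

lemma stmt10_pow_period {n q a p : ℕ} (hp : a * q ^ p ≡ a [MOD n]) :
    ∀ s, a * q ^ (p * s) ≡ a [MOD n] := by
  intro s
  induction s with
  | zero => simpa using Nat.ModEq.refl a
  | succ s ih =>
    have e : a * q ^ (p * (s + 1)) = a * q ^ (p * s) * q ^ p := by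
      rw [show p * (s + 1) = p * s + p from by ring, pow_add]; ring
    rw [e]
    exact (ih.mul_right _).trans hp

lemma stmt10_mod_period {n q a p : ℕ} (hp0 : 0 < p) (hp : a * q ^ p ≡ a [MOD n]) (j : ℕ) :
    a * q ^ j % n = a * q ^ (j % p) % n := by
  conv_lhs => rw [← Nat.div_add_mod j p]
  have e : a * q ^ (p * (j / p) + j % p) = a * q ^ (p * (j / p)) * q ^ (j % p) := by
    rw [pow_add]; ring
  rw [e]
  exact ((stmt10_pow_period hp (j / p)).mul_right _ : _)

lemma stmt10_gcd_period {n q a d m : ℕ} (hd : 0 < d) (hm : 0 < m)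
    (hqm : a * q ^ m ≡ a [MOD n]) (hqd : a * q ^ d ≡ a [MOD n]) :
    a * q ^ (Nat.gcd d m) ≡ a [MOD n] := by
  obtain ⟨x, y, hx, hxy⟩ := stmt10_bezout d m hd hm
  have h1 : a * q ^ (d * x) ≡ a [MOD n] := stmt10_pow_period hqd x
  rw [hxy] at h1
  have h2 : a * q ^ (m * y + Nat.gcd d m) = a * q ^ (m * y) * q ^ (Nat.gcd d m) := by
    rw [pow_add]; ring
  rw [h2] at h1
  exact ((stmt10_pow_period hqm y).mul_right _).symm.trans h1

lemma stmt10_coprime {q n m : ℕ} (hm : 0 < m) (hqn : q ^ m = n + 1) : Nat.Coprime q n := by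
  have h1 : Nat.gcd q n ∣ n := Nat.gcd_dvd_right q n
  have h2 : Nat.gcd q n ∣ n + 1 := by
    rw [← hqn]; exact dvd_pow (Nat.gcd_dvd_left q n) hm.ne'
  have h3 : Nat.gcd q n ∣ 1 := by
    have := Nat.dvd_sub h2 h1
    simpa using this
  exact Nat.dvd_one.mp h3

lemma stmt10_cancel {q n a : ℕ} (hcop : Nat.Coprime q n) {i j : ℕ} (hij : i ≤ j)
    (hf : a * q ^ i % n = a * q ^ j % n) : a * q ^ (j - i) ≡ a [MOD n] := by
  have e : q ^ i * (a * q ^ (j - i)) = a * q ^ j := by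
    rw [mul_left_comm, ← pow_add, Nat.add_sub_cancel' hij]
  have h : q ^ i * (a * q ^ (j - i)) ≡ q ^ i * a [MOD n] := by
    rw [e, mul_comm (q ^ i) a]
    exact (hf.symm : Nat.ModEq n (a * q ^ j) (a * q ^ i))
  exact Nat.ModEq.cancel_left_of_coprime ((hcop.pow_left i).symm) h

lemma stmt10_card {q n a p : ℕ} (hp : 0 < p) (hpn : p ≤ n)
    (hper : ∀ j, a * q ^ j % n = a * q ^ (j % p) % n)
    (hinj : Set.InjOn (fun j => a * q ^ j % n) (Finset.range p)) :
    (cyclCoset q n a).card = p := by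
  have himg : cyclCoset q n a = (Finset.range p).image (fun j => a * q ^ j % n) := by
    unfold cyclCoset
    apply Finset.Subset.antisymm
    · intro x hx
      simp only [Finset.mem_image, Finset.mem_range] at hx ⊢
      obtain ⟨j, hj, rfl⟩ := hx
      exact ⟨j % p, Nat.mod_lt j hp, (hper j).symm⟩
    · exact Finset.image_subset_image (Finset.range_subset_range.2 hpn)
  rw [himg, Finset.card_image_of_injOn hinj, Finset.card_range]

lemma stmt10_small {q k a : ℕ} (hq2 : 2 ≤ q) (hk : 2 ≤ k) (haU : a < q ^ (k + 1))
    {j : ℕ} (hj : j < k) : a * q ^ j % (q ^ (2 * k) - 1) = a * q ^ j := by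
  apply Nat.mod_eq_of_lt
  have h1 : a * q ^ j ≤ (q ^ (k + 1) - 1) * q ^ (k - 1) :=
    Nat.mul_le_mul (by omega) (Nat.pow_le_pow_right (by omega) (by omega))
  have h2 : (q ^ (k + 1) - 1) * q ^ (k - 1) = q ^ (2 * k) - q ^ (k - 1) := by
    rw [Nat.sub_mul, one_mul, ← pow_add, show k + 1 + (k - 1) = 2 * k from by omega]
  have h3 : 2 ≤ q ^ (k - 1) := le_trans hq2 (Nat.le_self_pow (by omega) q)
  have h4 : q ^ (k - 1) ≤ q ^ (2 * k) := Nat.pow_le_pow_right (by omega) (by omega)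
  omega

lemma stmt10_big {q k a : ℕ} (hq2 : 2 ≤ q) (hk : 2 ≤ k) (haU : a < q ^ (k + 1))
    {i : ℕ} (hi : i < k) :
    a * q ^ (k + i) % (q ^ (2 * k) - 1) = a % q ^ (k - i) * q ^ (k + i) + a / q ^ (k - i) := by
  have hq0 : 0 < q := by omega
  have hn1 : 1 ≤ q ^ (2 * k) := Nat.one_le_pow _ _ hq0
  have hqm : q ^ (2 * k) ≡ 1 [MOD q ^ (2 * k) - 1] := by
    show q ^ (2 * k) % _ = 1 % _
    rw [show q ^ (2 * k) = (q ^ (2 * k) - 1) + 1 from by omega]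
    exact Nat.add_mod_left _ 1
  set A := a / q ^ (k - i) with hA
  set B := a % q ^ (k - i) with hB
  have hAB : q ^ (k - i) * A + B = a := Nat.div_add_mod a (q ^ (k - i))
  have e1 : a * q ^ (k + i) = A * q ^ (2 * k) + B * q ^ (k + i) := by
    rw [← hAB, add_mul, mul_comm (q ^ (k - i)) A, mul_assoc, ← pow_add,
      show k - i + (k + i) = 2 * k from by omega]
  have e2 : a * q ^ (k + i) ≡ B * q ^ (k + i) + A [MOD q ^ (2 * k) - 1] := by
    rw [e1]
    calc A * q ^ (2 * k) + B * q ^ (k + i)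
        ≡ A * 1 + B * q ^ (k + i) [MOD q ^ (2 * k) - 1] := (hqm.mul_left A).add_right _
      _ = B * q ^ (k + i) + A := by ring
  have hA1 : A < q ^ (i + 1) := by
    rw [hA, Nat.div_lt_iff_lt_mul (pow_pos hq0 _), ← pow_add,
      show i + 1 + (k - i) = k + 1 from by omega]
    exact haU
  have hB1 : B < q ^ (k - i) := Nat.mod_lt a (pow_pos hq0 _)
  have key : B * q ^ (k + i) ≤ q ^ (2 * k) - q ^ (k + i) := by
    have h0 : B * q ^ (k + i) ≤ (q ^ (k - i) - 1) * q ^ (k + i) :=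
      Nat.mul_le_mul_right _ (by omega)
    rwa [Nat.sub_mul, one_mul, ← pow_add,
      show k - i + (k + i) = 2 * k from by omega] at h0
  have h5 : q ^ (i + 1) < q ^ (k + i) := Nat.pow_lt_pow_right (by omega) (by omega)
  have h6 : q ^ (k + i) ≤ q ^ (2 * k) := Nat.pow_le_pow_right (by omega) (by omega)
  have hbound : B * q ^ (k + i) + A < q ^ (2 * k) - 1 := by omega
  calc a * q ^ (k + i) % (q ^ (2 * k) - 1)
      = (B * q ^ (k + i) + A) % (q ^ (2 * k) - 1) := e2
    _ = B * q ^ (k + i) + A := Nat.mod_eq_of_lt hbound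

lemma stmt10_fac {q k : ℕ} (hq2 : 2 ≤ q) (hk : 1 ≤ k) :
    (q ^ k + 1) * (q ^ k - 1) = q ^ (2 * k) - 1 := by
  have h2q : 2 ≤ q ^ k := le_trans hq2 (Nat.le_self_pow (by omega) q)
  have e : q ^ k * q ^ k = q ^ (2 * k) := by
    rw [← pow_add, show k + k = 2 * k from by omega]
  obtain ⟨y, hy⟩ : ∃ y, q ^ k = y + 2 := ⟨q ^ k - 2, by omega⟩
  rw [← e, hy]
  zify [show (1:ℕ) ≤ (y + 2) * (y + 2) from by nlinarith,
    show (1:ℕ) ≤ y + 2 from by omega]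
  ring

lemma stmt10_digits {Q c r : ℕ} (hr : r < Q) :
    (c * Q + r) / Q = c ∧ (c * Q + r) % Q = r := by
  have hQ : 0 < Q := by omega
  constructor
  · rw [show c * Q + r = r + Q * c from by ring, Nat.add_mul_div_left r c hQ,
      Nat.div_eq_of_lt hr, zero_add]
  · rw [show c * Q + r = r + Q * c from by ring, Nat.add_mul_mod_self_left,
      Nat.mod_eq_of_lt hr]

lemma stmt10_leader {q k a : ℕ} (hq2 : 2 ≤ q) (hk : 2 ≤ k)
    (haU : a < q ^ (k + 1)) (hqa : ¬ q ∣ a)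
    (hLA : a / q ^ k ≤ a % q ^ k) : IsCosetLeader q (q ^ (2 * k) - 1) a := by
  intro j
  have hq0 : 0 < q := by omega
  have hn1 : 1 ≤ q ^ (2 * k) := Nat.one_le_pow _ _ hq0
  have hqm : q ^ (2 * k) ≡ 1 [MOD q ^ (2 * k) - 1] := by
    show q ^ (2 * k) % _ = 1 % _
    rw [show q ^ (2 * k) = (q ^ (2 * k) - 1) + 1 from by omega]
    exact Nat.add_mod_left _ 1
  have hbase : a * q ^ (2 * k) ≡ a [MOD q ^ (2 * k) - 1] := by
    simpa using hqm.mul_left a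
  rw [stmt10_mod_period (by omega) hbase j]
  have hjlt : j % (2 * k) < 2 * k := Nat.mod_lt j (by omega)
  rcases lt_or_ge (j % (2 * k)) k with hcase | hcase
  · rw [stmt10_small hq2 hk haU hcase]
    exact Nat.le_mul_of_pos_right a (pow_pos hq0 _)
  · rcases eq_or_lt_of_le hcase with heq | hlt
    · have hb := stmt10_big (q := q) (k := k) (a := a) hq2 hk haU (i := 0) (by omega)
      simp only [Nat.add_zero, Nat.sub_zero] at hb
      rw [← heq, hb]
      obtain ⟨t, htk⟩ := Nat.le.dest hLA
      have hAB : q ^ k * (a / q ^ k) + a % q ^ k = a := Nat.div_add_mod a (q ^ k)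
      have ht2 : t ≤ t * q ^ k := Nat.le_mul_of_pos_right t (pow_pos hq0 _)
      have expand : (a / q ^ k + t) * q ^ k = a / q ^ k * q ^ k + t * q ^ k := by ring
      have hmc : q ^ k * (a / q ^ k) = a / q ^ k * q ^ k := by ring
      have e3 : a % q ^ k * q ^ k = (a / q ^ k + t) * q ^ k := by rw [htk]
      omega
    · have hieq : j % (2 * k) = k + (j % (2 * k) - k) := by omega
      rw [hieq, stmt10_big hq2 hk haU (show j % (2 * k) - k < k from by omega)]
      have hB1 : 1 ≤ a % q ^ (k - (j % (2 * k) - k)) := by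
        rcases Nat.eq_zero_or_pos (a % q ^ (k - (j % (2 * k) - k))) with h0 | h1
        · exfalso
          exact hqa (dvd_trans (dvd_pow_self q (show k - (j % (2 * k) - k) ≠ 0 from by omega))
            (Nat.dvd_of_mod_eq_zero h0))
        · exact h1
      have h7 : q ^ (k + 1) ≤ q ^ (k + (j % (2 * k) - k)) :=
        Nat.pow_le_pow_right (by omega) (by omega)
      calc a ≤ q ^ (k + 1) := le_of_lt haU
        _ ≤ q ^ (k + (j % (2 * k) - k)) := h7
        _ = 1 * q ^ (k + (j % (2 * k) - k)) := (one_mul _).symm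
        _ ≤ a % q ^ (k - (j % (2 * k) - k)) * q ^ (k + (j % (2 * k) - k)) :=
            Nat.mul_le_mul_right _ hB1
        _ ≤ _ := Nat.le_add_right _ _

end stmt10aux

theorem stmt_10 (q m : ℕ) (hq : IsPrimePow q) (hm : Even m) (hm4 : 4 ≤ m) (a : ℕ)
    (ha1 : q ^ (m / 2) + 1 ≤ a) (ha2 : a ≤ q ^ (m / 2 + 1)) (hqa : ¬ q ∣ a) :
    ((∃ c : ℕ, 1 ≤ c ∧ c ≤ q - 1 ∧ a = c * (q ^ (m / 2) + 1)) →
      IsCosetLeader q (q ^ m - 1) a ∧ (cyclCoset q (q ^ m - 1) a).card = m / 2) ∧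
    ((∃ ah a0 : ℕ, 1 ≤ a0 ∧ a0 < ah ∧ ah ≤ q - 1 ∧ a = ah * q ^ (m / 2) + a0) →
      ¬ IsCosetLeader q (q ^ m - 1) a) ∧
    (((¬ ∃ c : ℕ, 1 ≤ c ∧ c ≤ q - 1 ∧ a = c * (q ^ (m / 2) + 1)) ∧
      (¬ ∃ ah a0 : ℕ, 1 ≤ a0 ∧ a0 < ah ∧ ah ≤ q - 1 ∧ a = ah * q ^ (m / 2) + a0)) →
      IsCosetLeader q (q ^ m - 1) a ∧ (cyclCoset q (q ^ m - 1) a).card = m) := by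
  obtain ⟨k, rfl⟩ : ∃ k, m = 2 * k := by
    obtain ⟨r, hr⟩ := hm; exact ⟨r, by omega⟩
  have hk2 : 2 ≤ k := by omega
  have hq2 : 2 ≤ q := hq.two_le
  have hq0 : 0 < q := by omega
  rw [show 2 * k / 2 = k from by omega] at ha1 ha2 ⊢
  have haU : a < q ^ (k + 1) := by
    rcases eq_or_lt_of_le ha2 with heq | hlt
    · exact absurd (heq ▸ dvd_pow_self q (Nat.succ_ne_zero k)) hqa
    · exact hlt
  have hapos : 0 < a := by
    have : 1 ≤ q ^ k := Nat.one_le_pow _ _ hq0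
    omega
  have hn1 : 1 ≤ q ^ (2 * k) := Nat.one_le_pow _ _ hq0
  set n := q ^ (2 * k) - 1 with hn
  have hnq : q ^ (2 * k) = n + 1 := by omega
  have hqm : q ^ (2 * k) ≡ 1 [MOD n] := by
    show q ^ (2 * k) % _ = 1 % _
    rw [hnq]; exact Nat.add_mod_left _ 1
  have hbase : a * q ^ (2 * k) ≡ a [MOD n] := by simpa using hqm.mul_left a
  have hcop : Nat.Coprime q n := stmt10_coprime (by omega) hnq
  have hnm : 2 * k ≤ n := by
    have h1 : 2 * k < 2 ^ (2 * k) := Nat.lt_two_pow_self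
    have h2 : 2 ^ (2 * k) ≤ q ^ (2 * k) := Nat.pow_le_pow_left hq2 (2 * k)
    omega
  have hqk2 : 2 ≤ q ^ k := le_trans hq2 (Nat.le_self_pow (by omega) q)
  have hqkq : q ≤ q ^ k := Nat.le_self_pow (by omega) q
  have hfac : (q ^ k + 1) * (q ^ k - 1) = n := stmt10_fac hq2 (by omega)
  -- the key divisibility tool
  have key : ∀ d, 0 < d → d < 2 * k → a * q ^ d ≡ a [MOD n] →
      (k ∣ d ∧ (q ^ k + 1) ∣ a) := by
    intro d hd1 hd2 hmodeq
    set g := Nat.gcd d (2 * k) with hg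
    have hgd : g ∣ d := Nat.gcd_dvd_left _ _
    have hgm : g ∣ 2 * k := Nat.gcd_dvd_right _ _
    have hg1 : 0 < g := Nat.gcd_pos_of_pos_left _ hd1
    have hgled : g ≤ d := Nat.le_of_dvd hd1 hgd
    have hmodg : a * q ^ g ≡ a [MOD n] := stmt10_gcd_period hd1 (by omega) hbase hmodeq
    have hqg2 : 2 ≤ q ^ g := le_trans hq2 (Nat.le_self_pow hg1.ne' q)
    have hdvd : n ∣ a * (q ^ g - 1) := by
      have h1 : a ≤ a * q ^ g := Nat.le_mul_of_pos_right a (pow_pos hq0 _)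
      have h2 := (Nat.modEq_iff_dvd' h1).mp hmodg.symm
      rwa [show a * q ^ g - a = a * (q ^ g - 1) from by rw [Nat.mul_sub, mul_one]] at h2
    have hgsub : (q ^ g - 1) ∣ n := by
      have h0 := Nat.sub_dvd_pow_sub_pow (q ^ g) 1 (2 * k / g)
      rwa [one_pow, ← pow_mul, Nat.mul_div_cancel' hgm] at h0
    set N := n / (q ^ g - 1) with hN
    have hNn : N * (q ^ g - 1) = n := Nat.div_mul_cancel hgsub
    have hNdvd : N ∣ a := by
      have h0 : N * (q ^ g - 1) ∣ a * (q ^ g - 1) := hNn ▸ hdvd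
      exact (Nat.mul_dvd_mul_iff_right (show 0 < q ^ g - 1 from by omega)).mp h0
    have hNa : N ≤ a := Nat.le_of_dvd hapos hNdvd
    have hgk : g ≤ k := by
      obtain ⟨t, ht⟩ := hgm
      have ht2 : 2 ≤ t := by
        rcases Nat.lt_or_ge t 2 with h | h
        · interval_cases t <;> omega
        · exact h
      have h0 : g * 2 ≤ g * t := Nat.mul_le_mul_left g ht2
      omega
    have hglt : ¬ (g < k) := by
      intro hgltk
      have h8 : (q ^ g - 1) * q ^ (2 * k - g) ≤ n := by
        rw [Nat.sub_mul, one_mul, ← pow_add, show g + (2 * k - g) = 2 * k from by omega]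
        have h0 : 1 ≤ q ^ (2 * k - g) := Nat.one_le_pow _ _ hq0
        omega
      have h9 : q ^ (2 * k - g) * (q ^ g - 1) ≤ N * (q ^ g - 1) := by
        rw [hNn, mul_comm]; exact h8
      have h10 : q ^ (2 * k - g) ≤ N := Nat.le_of_mul_le_mul_right h9 (by omega)
      have h11 : q ^ (k + 1) ≤ q ^ (2 * k - g) := Nat.pow_le_pow_right (by omega) (by omega)
      omega
    have hgk' : g = k := by omega
    rw [hgk'] at hNn
    constructor
    · exact hgk' ▸ hgd
    · have hNval : N = q ^ k + 1 := by
        refine Nat.eq_of_mul_eq_mul_right (show 0 < q ^ k - 1 from by omega) ?_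
        rw [hNn, hfac]
      exact hNval ▸ hNdvd
  -- contradiction helper for case 3 and case 1 injectivity
  have habs : ∀ i j : ℕ, i < j → j < 2 * k →
      a * q ^ i % n = a * q ^ j % n →
      (k ∣ (j - i) ∧ (q ^ k + 1) ∣ a) := by
    intro i j hlt hjlt hf
    exact key (j - i) (by omega) (by omega) (stmt10_cancel hcop (le_of_lt hlt) hf)
  have hform1 : ∀ c : ℕ, a = (q ^ k + 1) * c →
      (1 ≤ c ∧ c ≤ q - 1 ∧ a = c * (q ^ k + 1)) := by
    intro c hc
    have hc1 : 1 ≤ c := by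
      rcases Nat.eq_zero_or_pos c with rfl | h
      · simp at hc; omega
      · exact h
    have hcq : c ≤ q - 1 := by
      by_contra hcq
      have h0 : q ≤ c := by omega
      have h1 : (q ^ k + 1) * q ≤ (q ^ k + 1) * c := Nat.mul_le_mul_left _ h0
      have h2 : (q ^ k + 1) * q = q ^ (k + 1) + q := by
        rw [add_mul, one_mul, ← pow_succ]
      omega
    exact ⟨hc1, hcq, by rw [hc]; ring⟩
  refine ⟨?_, ?_, ?_⟩
  · -- Part 1
    rintro ⟨c, hc1, hcq, hceq⟩
    have hclt : c < q ^ k := by omega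
    have hdigit : a = c * q ^ k + c := by rw [hceq]; ring
    have hdiv : a / q ^ k = c := by rw [hdigit]; exact (stmt10_digits hclt).1
    have hmod : a % q ^ k = c := by rw [hdigit]; exact (stmt10_digits hclt).2
    constructor
    · exact stmt10_leader hq2 hk2 haU hqa (by rw [hdiv, hmod])
    · -- coset size k
      have hperk : a * q ^ k ≡ a [MOD n] := by
        have h1 : a ≤ a * q ^ k := Nat.le_mul_of_pos_right a (pow_pos hq0 _)
        refine ((Nat.modEq_iff_dvd' h1).mpr ?_).symm
        have e0 : a * (q ^ k - 1) = n * c := by rw [hceq, ← hfac]; ring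
        rw [show a * q ^ k - a = a * (q ^ k - 1) from by rw [Nat.mul_sub, mul_one], e0]
        exact dvd_mul_right n c
      refine stmt10_card (by omega) (by omega) (stmt10_mod_period (by omega) hperk) ?_
      intro i hi j hj hij
      simp only [Finset.coe_range, Set.mem_Iio] at hi hj
      by_contra hne
      rcases Nat.lt_or_ge i j with hlt | hge
      · obtain ⟨hkd, -⟩ := habs i j hlt (by omega) hij
        have := Nat.le_of_dvd (by omega) hkd
        omega
      · have hlt : j < i := by omega
        obtain ⟨hkd, -⟩ := habs j i hlt (by omega) hij.symm
        have := Nat.le_of_dvd (by omega) hkd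
        omega
  · -- Part 2
    rintro ⟨ah, a0, ha01, ha0ah, hahq, haeq⟩ hlead
    have ha0lt : a0 < q ^ k := by omega
    have hdiv : a / q ^ k = ah := by rw [haeq]; exact (stmt10_digits ha0lt).1
    have hmod : a % q ^ k = a0 := by rw [haeq]; exact (stmt10_digits ha0lt).2
    have hb := stmt10_big (q := q) (k := k) (a := a) hq2 hk2 haU (i := 0) (by omega)
    simp only [Nat.add_zero, Nat.sub_zero] at hb
    have hcl := hlead k
    rw [hb, hdiv, hmod] at hcl
    -- a = ah * q^k + a0 ≤ a0 * q^k + ah, with a0 < ah : contradiction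
    obtain ⟨t, htk⟩ : ∃ t, ah = a0 + (t + 1) := ⟨ah - a0 - 1, by omega⟩
    rw [haeq, htk] at hcl
    have e1 : (a0 + (t + 1)) * q ^ k = a0 * q ^ k + (t + 1) * q ^ k := by ring
    have e2 : 2 * (t + 1) ≤ (t + 1) * q ^ k := by
      calc 2 * (t + 1) = (t + 1) * 2 := by ring
        _ ≤ (t + 1) * q ^ k := Nat.mul_le_mul_left _ hqk2
    omega
  · -- Part 3
    rintro ⟨hnot1, hnot2⟩
    have hdamod : a = a / q ^ k * q ^ k + a % q ^ k := by
      rw [mul_comm]; exact (Nat.div_add_mod a (q ^ k)).symm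
    have hmod1 : 1 ≤ a % q ^ k := by
      rcases Nat.eq_zero_or_pos (a % q ^ k) with h0 | h1
      · exact absurd (dvd_trans (dvd_pow_self q (show k ≠ 0 from by omega))
          (Nat.dvd_of_mod_eq_zero h0)) hqa
      · exact h1
    have hdivq : a / q ^ k < q := by
      rw [Nat.div_lt_iff_lt_mul (pow_pos hq0 _), ← pow_succ']
      exact haU
    have hLA : a / q ^ k ≤ a % q ^ k := by
      by_contra hc
      exact hnot2 ⟨a / q ^ k, a % q ^ k, hmod1, by omega, by omega, hdamod⟩
    constructor
    · exact stmt10_leader hq2 hk2 haU hqa hLA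
    · refine stmt10_card (by omega) hnm (stmt10_mod_period (by omega) hbase) ?_
      intro i hi j hj hij
      simp only [Finset.coe_range, Set.mem_Iio] at hi hj
      by_contra hne
      rcases Nat.lt_or_ge i j with hlt | hge
      · obtain ⟨-, hform⟩ := habs i j hlt hj hij
        obtain ⟨c, hc⟩ := hform
        exact hnot1 ⟨c, hform1 c hc⟩
      · have hlt : j < i := by omega
        obtain ⟨-, hform⟩ := habs j i hlt hi hij.symm
        obtain ⟨c, hc⟩ := hform
        exact hnot1 ⟨c, hform1 c hc⟩
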